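/- Let d ≥ 2, let E1, E2 be transverse complete flags of ℂ^d, let i = (i1,i2) ∈ A, and let z be a nonzero complex number. Since ℂ^d = E1^{i1} ⊕ E2^{i2}, let c ∈ GL_d(ℂ) be the linear map acting as multiplication by z on E1^{i1} and as the identity on E2^{i2}. Then c preserves both flags E1 and E2, and for all complete flags F and G such that (E1,E2,F) and (E1,E2,G) are in general position: the triple (E1,E2,c·G) is in general position, D^i(E1,E2,F,c·G) = z·D^i(E1,E2,F,G), and D^k(E1,E2,F,c·G) = D^k(E1,E2,F,G) for every k ∈ A with k ≠ i. -/

import Mathlib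

noncomputable section

/-- A complete flag of `ℂ^d`: an increasing chain of subspaces `F 0 ⊆ F 1 ⊆ ⋯` of `ℂ^d`
with `dim (F k) = k` for all `k ≤ d`. -/
def IsCompleteFlag (d : ℕ) (F : ℕ → Submodule ℂ (Fin d → ℂ)) : Prop :=
  Monotone F ∧ ∀ k, k ≤ d → Module.finrank ℂ ↥(F k) = k

/-- Two complete flags of `ℂ^d` are transverse: `F^k + G^(d-k) = ℂ^d` for all `k`. -/
def TransverseFlags (d : ℕ) (F G : ℕ → Submodule ℂ (Fin d → ℂ)) : Prop :=
  ∀ k, k ≤ d → F k ⊔ G (d - k) = ⊤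

/-- The flag `g · F`, whose subspaces are the images `g (F k)`. -/
def flagMap (d : ℕ) (g : Matrix (Fin d) (Fin d) ℂ) (F : ℕ → Submodule ℂ (Fin d → ℂ)) :
    ℕ → Submodule ℂ (Fin d → ℂ) :=
  fun k => Submodule.map g.mulVecLin (F k)

/-- A triple of flags of `ℂ^d` in general position:
`F1^k1 + F2^k2 + F3^k3 = ℂ^d` whenever `k1 + k2 + k3 = d`. -/
def GenPos3 (d : ℕ) (F1 F2 F3 : ℕ → Submodule ℂ (Fin d → ℂ)) : Prop :=
  ∀ k1 k2 k3 : ℕ, k1 + k2 + k3 = d → F1 k1 ⊔ F2 k2 ⊔ F3 k3 = ⊤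

/-- The index set `B`: triples of positive integers summing to `d`. -/
def memB (d : ℕ) (j : ℕ × ℕ × ℕ) : Prop :=
  0 < j.1 ∧ 0 < j.2.1 ∧ 0 < j.2.2 ∧ j.1 + j.2.1 + j.2.2 = d

/-- The index set `A`: pairs of positive integers summing to `d`. -/
def memA (d : ℕ) (i : ℕ × ℕ) : Prop :=
  0 < i.1 ∧ 0 < i.2 ∧ i.1 + i.2 = d

/-- `v 0, v 1, …, v (d-1)` is a basis adapted to the flag `F`: for every `k ≤ d`, the
subspace `F k` is spanned by the first `k` vectors.  A nonzero element `f^k` of the line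
`⋀^k F^k` is then given by `v 0 ∧ ⋯ ∧ v (k-1)`. -/
def IsAdaptedBasis (d : ℕ) (F : ℕ → Submodule ℂ (Fin d → ℂ)) (v : ℕ → Fin d → ℂ) : Prop :=
  ∀ k, k ≤ d → F k = Submodule.span ℂ (v '' {m | m < k})

/-- A choice of adapted basis for a flag. -/
noncomputable def flagBasis (d : ℕ) (F : ℕ → Submodule ℂ (Fin d → ℂ)) : ℕ → Fin d → ℂ :=
  Classical.epsilon (IsAdaptedBasis d F)

/-- The scalar `f1^a ∧ f2^b ∧ f3^(d-a-b)`: the wedge product of the first `a` vectors of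
`v1`, the first `b` vectors of `v2` and the first `d - a - b` vectors of `v3`, viewed as a
complex number via the determinant (i.e. via the standard identification `⋀^d ℂ^d ≅ ℂ`). -/
noncomputable def wedgeDet (d a b : ℕ) (v1 v2 v3 : ℕ → Fin d → ℂ) : ℂ :=
  Matrix.det (Matrix.of fun (i j : Fin d) =>
    if (i : ℕ) < a then v1 (i : ℕ) j
    else if (i : ℕ) < a + b then v2 ((i : ℕ) - a) j
    else v3 ((i : ℕ) - a - b) j)

/-- The triple ratio `T^j(F1,F2,F3)` of a triple of flags in general position,
for `j = (j1,j2,j3)` with `j1 + j2 + j3 = d`. -/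
noncomputable def tripleRatio (d : ℕ) (j : ℕ × ℕ × ℕ)
    (F1 F2 F3 : ℕ → Submodule ℂ (Fin d → ℂ)) : ℂ :=
  (wedgeDet d (j.1 + 1) j.2.1 (flagBasis d F1) (flagBasis d F2) (flagBasis d F3) *
      wedgeDet d j.1 (j.2.1 - 1) (flagBasis d F1) (flagBasis d F2) (flagBasis d F3) *
      wedgeDet d (j.1 - 1) (j.2.1 + 1) (flagBasis d F1) (flagBasis d F2) (flagBasis d F3)) /
    (wedgeDet d (j.1 - 1) j.2.1 (flagBasis d F1) (flagBasis d F2) (flagBasis d F3) *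
      wedgeDet d j.1 (j.2.1 + 1) (flagBasis d F1) (flagBasis d F2) (flagBasis d F3) *
      wedgeDet d (j.1 + 1) (j.2.1 - 1) (flagBasis d F1) (flagBasis d F2) (flagBasis d F3))

/-- A choice of nonzero vector in a (1-dimensional) subspace. -/
noncomputable def lineVec (d : ℕ) (l : Submodule ℂ (Fin d → ℂ)) : Fin d → ℂ :=
  Classical.epsilon fun v => v ∈ l ∧ v ≠ 0

/-- The double ratio `D^i(G1,G2,ℓ1,ℓ2)` of a pair of transverse flags and a pair of lines,
for `i = (i1,i2)` with `i1 + i2 = d`. -/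
noncomputable def doubleRatioLine (d : ℕ) (i : ℕ × ℕ) (G1 G2 : ℕ → Submodule ℂ (Fin d → ℂ))
    (l1 l2 : Submodule ℂ (Fin d → ℂ)) : ℂ :=
  -((wedgeDet d i.1 (i.2 - 1) (flagBasis d G1) (flagBasis d G2) (fun _ => lineVec d l1) *
        wedgeDet d (i.1 - 1) i.2 (flagBasis d G1) (flagBasis d G2) (fun _ => lineVec d l2)) /
      (wedgeDet d i.1 (i.2 - 1) (flagBasis d G1) (flagBasis d G2) (fun _ => lineVec d l2) *
        wedgeDet d (i.1 - 1) i.2 (flagBasis d G1) (flagBasis d G2) (fun _ => lineVec d l1)))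

/-- The double ratio `D^i(G1,G2,H1,H2)` of four flags, which only depends on the
`1`-dimensional parts of `H1` and `H2`. -/
noncomputable def doubleRatio (d : ℕ) (i : ℕ × ℕ)
    (G1 G2 H1 H2 : ℕ → Submodule ℂ (Fin d → ℂ)) : ℂ :=
  doubleRatioLine d i G1 G2 (H1 1) (H2 1)

lemma exists_adapted {d : ℕ} {F : ℕ → Submodule ℂ (Fin d → ℂ)} (hF : IsCompleteFlag d F) :
    ∃ v, IsAdaptedBasis d F v := by
  obtain ⟨hmono, hrank⟩ := hF
  have hex : ∀ k, k < d → ∃ x, x ∈ F (k + 1) ∧ x ∉ F k := by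
    intro k hk
    have h1 : F k ≤ F (k + 1) := hmono (Nat.le_succ k)
    have hne : F k ≠ F (k + 1) := by
      intro h
      have h2 := hrank k hk.le
      rw [h, hrank (k + 1) hk] at h2; omega
    obtain ⟨x, hx1, hx2⟩ := SetLike.exists_of_lt (lt_of_le_of_ne h1 hne)
    exact ⟨x, hx1, hx2⟩
  choose v hv1 hv2 using hex
  refine ⟨fun k => if h : k < d then v k h else 0, ?_⟩
  intro k hk
  induction k with
  | zero =>
    have h0 : F 0 = ⊥ := by
      have := hrank 0 (by omega)
      exact Submodule.finrank_eq_zero.mp this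
    have : {m : ℕ | m < 0} = (∅ : Set ℕ) := by ext m; simp
    simp [h0, this]
  | succ k ih =>
    have hkd : k < d := hk
    have ihk := ih (by omega)
    have hset : {m : ℕ | m < k + 1} = insert k {m : ℕ | m < k} := by
      ext m; simp; omega
    rw [hset, Set.image_insert_eq, Submodule.span_insert, ← ihk]
    have hvk : (if h : k < d then v k h else 0) = v k hkd := dif_pos hkd
    rw [hvk]
    set S := Submodule.span ℂ {v k hkd} ⊔ F k with hS
    have hle : S ≤ F (k + 1) := by
      apply sup_le
      · rw [Submodule.span_le, Set.singleton_subset_iff]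
        exact hv1 k hkd
      · exact hmono (Nat.le_succ k)
    have hlt : F k < S := by
      refine lt_of_le_of_ne le_sup_right ?_
      intro h
      apply hv2 k hkd
      rw [h]
      exact Submodule.mem_sup_left (Submodule.mem_span_singleton_self _)
    have hfr : Module.finrank ℂ ↥(F (k + 1)) ≤ Module.finrank ℂ ↥S := by
      rw [hrank (k + 1) hk]
      have := Submodule.finrank_lt_finrank_of_lt hlt
      rw [hrank k hkd.le] at this
      omega
    exact (Submodule.eq_of_le_of_finrank_le hle hfr).symm

lemma flagBasis_adapted {d : ℕ} {F : ℕ → Submodule ℂ (Fin d → ℂ)} (hF : IsCompleteFlag d F) :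
    IsAdaptedBasis d F (flagBasis d F) :=
  Classical.epsilon_spec (exists_adapted hF)

def baseMat (d a b : ℕ) (v1 v2 : ℕ → Fin d → ℂ) : Matrix (Fin d) (Fin d) ℂ :=
  Matrix.of fun (i j : Fin d) =>
    if (i : ℕ) < a then v1 (i : ℕ) j
    else if (i : ℕ) < a + b then v2 ((i : ℕ) - a) j
    else 0

lemma wedgeDet_eq_det_updateRow {d a b : ℕ} (hab : a + b = d - 1) (hd : 0 < d)
    (v1 v2 : ℕ → Fin d → ℂ) (x : Fin d → ℂ) :
    wedgeDet d a b v1 v2 (fun _ => x) =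
      ((baseMat d a b v1 v2).updateRow ⟨d - 1, by omega⟩ x).det := by
  unfold wedgeDet baseMat
  congr 1
  ext i j
  rcases eq_or_ne i ⟨d - 1, by omega⟩ with h | h
  · subst h
    rw [Matrix.updateRow_self]
    simp only [Matrix.of_apply]
    rw [if_neg (by simp; omega), if_neg (by simp; omega)]
  · rw [Matrix.updateRow_ne h]
    have hi : (i : ℕ) < d - 1 := by
      have h1 := i.isLt
      have h2 : (i : ℕ) ≠ d - 1 := fun hh => h (Fin.ext hh)
      omega
    simp only [Matrix.of_apply]
    rcases lt_or_ge (i : ℕ) a with h1 | h1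
    · rw [if_pos h1, if_pos h1]
    · rw [if_neg (not_lt.2 h1), if_neg (not_lt.2 h1), if_pos (by omega), if_pos (by omega)]

lemma wedgeDet_add {d a b : ℕ} (hab : a + b = d - 1) (hd : 0 < d)
    (v1 v2 : ℕ → Fin d → ℂ) (x y : Fin d → ℂ) :
    wedgeDet d a b v1 v2 (fun _ => x + y) =
      wedgeDet d a b v1 v2 (fun _ => x) + wedgeDet d a b v1 v2 (fun _ => y) := by
  rw [wedgeDet_eq_det_updateRow hab hd, wedgeDet_eq_det_updateRow hab hd,
    wedgeDet_eq_det_updateRow hab hd, Matrix.det_updateRow_add]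

lemma wedgeDet_smul {d a b : ℕ} (hab : a + b = d - 1) (hd : 0 < d)
    (v1 v2 : ℕ → Fin d → ℂ) (s : ℂ) (x : Fin d → ℂ) :
    wedgeDet d a b v1 v2 (fun _ => s • x) = s * wedgeDet d a b v1 v2 (fun _ => x) := by
  rw [wedgeDet_eq_det_updateRow hab hd, wedgeDet_eq_det_updateRow hab hd,
    Matrix.det_updateRow_smul]

lemma wedgeDet_row1 {d a b : ℕ} (hab : a + b = d - 1) (hd : 0 < d)
    (v1 v2 : ℕ → Fin d → ℂ) {m : ℕ} (hm : m < a) :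
    wedgeDet d a b v1 v2 (fun _ => v1 m) = 0 := by
  rw [wedgeDet_eq_det_updateRow hab hd]
  have hmd : m < d := by omega
  apply Matrix.det_zero_of_row_eq (i := (⟨m, hmd⟩ : Fin d)) (j := ⟨d - 1, by omega⟩)
  · intro h
    have := Fin.mk.injEq m hmd (d-1) (by omega) ▸ h
    simp at h; omega
  · funext j
    rw [Matrix.updateRow_ne (by intro h; simp at h; omega), Matrix.updateRow_self]
    simp [baseMat, hm]

lemma wedgeDet_row2 {d a b : ℕ} (hab : a + b = d - 1) (hd : 0 < d)
    (v1 v2 : ℕ → Fin d → ℂ) {m : ℕ} (hm : m < b) :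
    wedgeDet d a b v1 v2 (fun _ => v2 m) = 0 := by
  rw [wedgeDet_eq_det_updateRow hab hd]
  have hmd : a + m < d := by omega
  apply Matrix.det_zero_of_row_eq (i := (⟨a + m, hmd⟩ : Fin d)) (j := ⟨d - 1, by omega⟩)
  · intro h
    rw [Fin.mk.injEq] at h; omega
  · funext j
    rw [Matrix.updateRow_ne (by intro h; rw [Fin.mk.injEq] at h; omega), Matrix.updateRow_self]
    simp only [baseMat, Matrix.of_apply]
    rw [if_neg (by omega), if_pos (by omega)]
    congr 1
    omega

lemma wedgeDet_span1 {d a b : ℕ} (hab : a + b = d - 1) (hd : 0 < d)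
    (v1 v2 : ℕ → Fin d → ℂ) {x : Fin d → ℂ}
    (hx : x ∈ Submodule.span ℂ (v1 '' {m | m < a})) :
    wedgeDet d a b v1 v2 (fun _ => x) = 0 := by
  induction hx using Submodule.span_induction with
  | mem y hy =>
    obtain ⟨m, hm, rfl⟩ := hy
    exact wedgeDet_row1 hab hd v1 v2 hm
  | zero =>
    rw [wedgeDet_eq_det_updateRow hab hd]
    apply Matrix.det_eq_zero_of_row_eq_zero ⟨d - 1, by omega⟩
    intro j
    rw [Matrix.updateRow_self]
    rfl
  | add y z hy hz ihy ihz =>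
    rw [wedgeDet_add hab hd, ihy, ihz, add_zero]
  | smul s y hy ihy =>
    rw [wedgeDet_smul hab hd, ihy, mul_zero]

lemma wedgeDet_span2 {d a b : ℕ} (hab : a + b = d - 1) (hd : 0 < d)
    (v1 v2 : ℕ → Fin d → ℂ) {x : Fin d → ℂ}
    (hx : x ∈ Submodule.span ℂ (v2 '' {m | m < b})) :
    wedgeDet d a b v1 v2 (fun _ => x) = 0 := by
  induction hx using Submodule.span_induction with
  | mem y hy =>
    obtain ⟨m, hm, rfl⟩ := hy
    exact wedgeDet_row2 hab hd v1 v2 hm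
  | zero =>
    rw [wedgeDet_eq_det_updateRow hab hd]
    apply Matrix.det_eq_zero_of_row_eq_zero ⟨d - 1, by omega⟩
    intro j
    rw [Matrix.updateRow_self]
    rfl
  | add y z hy hz ihy ihz =>
    rw [wedgeDet_add hab hd, ihy, ihz, add_zero]
  | smul s y hy ihy =>
    rw [wedgeDet_smul hab hd, ihy, mul_zero]

lemma wedgeDet_scale1 {d a b : ℕ} (hab : a + b = d - 1) (hd : 0 < d)
    (v1 v2 : ℕ → Fin d → ℂ) {p q w u : Fin d → ℂ} {s r : ℂ}
    (hp : p ∈ Submodule.span ℂ (v1 '' {m | m < a}))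
    (hu : u = p + q) (hw : w = s • p + r • q) :
    wedgeDet d a b v1 v2 (fun _ => w) = r * wedgeDet d a b v1 v2 (fun _ => u) := by
  rw [hu, hw, wedgeDet_add hab hd, wedgeDet_add hab hd, wedgeDet_smul hab hd,
    wedgeDet_smul hab hd, wedgeDet_span1 hab hd v1 v2 hp]
  ring

lemma wedgeDet_scale2 {d a b : ℕ} (hab : a + b = d - 1) (hd : 0 < d)
    (v1 v2 : ℕ → Fin d → ℂ) {p q w u : Fin d → ℂ} {s r : ℂ}
    (hq : q ∈ Submodule.span ℂ (v2 '' {m | m < b}))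
    (hu : u = p + q) (hw : w = s • p + r • q) :
    wedgeDet d a b v1 v2 (fun _ => w) = s * wedgeDet d a b v1 v2 (fun _ => u) := by
  rw [hu, hw, wedgeDet_add hab hd, wedgeDet_add hab hd, wedgeDet_smul hab hd,
    wedgeDet_smul hab hd, wedgeDet_span2 hab hd v1 v2 hq]
  ring

lemma ratio_scale (z t A B A'' B' : ℂ) (ht : t ≠ 0) :
    -((A * ((t * z) * B')) / ((t * A'') * B)) = z * -((A * B') / (A'' * B)) := by
  rw [show A * ((t * z) * B') = t * (z * (A * B')) by ring,
    show (t * A'') * B = t * (A'' * B) by ring, mul_div_mul_left _ _ ht, mul_div_assoc, mul_neg]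

lemma ratio_scale' (s A B A'' B' : ℂ) (hs : s ≠ 0) :
    -((A * (s * B')) / ((s * A'') * B)) = -((A * B') / (A'' * B)) := by
  rw [show A * (s * B') = s * (A * B') by ring,
    show (s * A'') * B = s * (A'' * B) by ring, mul_div_mul_left _ _ hs]

lemma lineVec_spec {d : ℕ} {l : Submodule ℂ (Fin d → ℂ)} (h : l ≠ ⊥) :
    lineVec d l ∈ l ∧ lineVec d l ≠ 0 :=
  Classical.epsilon_spec (Submodule.exists_mem_ne_zero_of_ne_bot h)

theorem statement_8 (d : ℕ) (hd : 2 ≤ d) (E1 E2 : ℕ → Submodule ℂ (Fin d → ℂ))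
    (hE1 : IsCompleteFlag d E1) (hE2 : IsCompleteFlag d E2) (htr : TransverseFlags d E1 E2)
    (i1 i2 : ℕ) (hi : memA d (i1, i2)) (z : ℂ) (hz : z ≠ 0) :
    -- `ℂ^d = E1^(i1) ⊕ E2^(i2)`
    IsCompl (E1 i1) (E2 i2) ∧
    -- there is a `c ∈ GL_d(ℂ)` acting as `z` on `E1^(i1)` and as the identity on `E2^(i2)`
    (∃ c : Matrix (Fin d) (Fin d) ℂ, IsUnit c ∧
        (∀ v ∈ E1 i1, c.mulVec v = z • v) ∧ ∀ v ∈ E2 i2, c.mulVec v = v) ∧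
    -- and any such `c` preserves both flags and transforms double ratios as claimed
    ∀ c : Matrix (Fin d) (Fin d) ℂ, IsUnit c →
      (∀ v ∈ E1 i1, c.mulVec v = z • v) → (∀ v ∈ E2 i2, c.mulVec v = v) →
      flagMap d c E1 = E1 ∧ flagMap d c E2 = E2 ∧
      ∀ F G : ℕ → Submodule ℂ (Fin d → ℂ), IsCompleteFlag d F → IsCompleteFlag d G →
        GenPos3 d E1 E2 F → GenPos3 d E1 E2 G →
        GenPos3 d E1 E2 (flagMap d c G) ∧
        doubleRatio d (i1, i2) E1 E2 F (flagMap d c G) =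
          z * doubleRatio d (i1, i2) E1 E2 F G ∧
        ∀ k : ℕ × ℕ, memA d k → k ≠ (i1, i2) →
          doubleRatio d k E1 E2 F (flagMap d c G) = doubleRatio d k E1 E2 F G := by
  have hd0 : 0 < d := by omega
  obtain ⟨hi1, hi2, hsum⟩ := hi
  simp only at hi1 hi2 hsum
  have hi1d : i1 ≤ d := by omega
  have hi2d : i2 ≤ d := by omega
  have hcodis : E1 i1 ⊔ E2 i2 = ⊤ := by
    have h := htr i1 hi1d
    rwa [show d - i1 = i2 by omega] at h
  have hfr1 := hE1.2 i1 hi1d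
  have hfr2 := hE2.2 i2 hi2d
  have hdis : E1 i1 ⊓ E2 i2 = ⊥ := by
    have h := Submodule.finrank_sup_add_finrank_inf_eq (E1 i1) (E2 i2)
    rw [hcodis, hfr1, hfr2] at h
    have htop : Module.finrank ℂ ↥(⊤ : Submodule ℂ (Fin d → ℂ)) = d := by
      rw [finrank_top]
      simp [Module.finrank_pi]
    rw [htop] at h
    exact Submodule.finrank_eq_zero.mp (by omega)
  have hcompl : IsCompl (E1 i1) (E2 i2) := ⟨disjoint_iff.mpr hdis, codisjoint_iff.mpr hcodis⟩
  refine ⟨hcompl, ?_, ?_⟩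
  · -- existence of c
    set P1 : (Fin d → ℂ) →ₗ[ℂ] (Fin d → ℂ) :=
      (E1 i1).subtype ∘ₗ Submodule.projectionOnto (E1 i1) (E2 i2) hcompl with hP1def
    set P2 : (Fin d → ℂ) →ₗ[ℂ] (Fin d → ℂ) :=
      (E2 i2).subtype ∘ₗ Submodule.projectionOnto (E2 i2) (E1 i1) hcompl.symm with hP2def
    have hP1mem : ∀ v, P1 v ∈ E1 i1 := by
      intro v; simp only [hP1def, LinearMap.coe_comp, Function.comp_apply,
        Submodule.coe_subtype]; exact Submodule.coe_mem _
    have hP2mem : ∀ v, P2 v ∈ E2 i2 := by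
      intro v; simp only [hP2def, LinearMap.coe_comp, Function.comp_apply,
        Submodule.coe_subtype]; exact Submodule.coe_mem _
    have hP1_left : ∀ v, v ∈ E1 i1 → P1 v = v := by
      intro v hv
      have h := Submodule.projectionOnto_apply_left hcompl ⟨v, hv⟩
      simp only [hP1def, LinearMap.coe_comp, Function.comp_apply, Submodule.coe_subtype]
      rw [show v = ((⟨v, hv⟩ : E1 i1) : Fin d → ℂ) from rfl, h]
    have hP1_right : ∀ v, v ∈ E2 i2 → P1 v = 0 := by
      intro v hv
      have h := Submodule.projectionOnto_apply_of_mem_right hcompl hv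
      simp only [hP1def, LinearMap.coe_comp, Function.comp_apply, Submodule.coe_subtype, h,
        ZeroMemClass.coe_zero]
    have hP2_left : ∀ v, v ∈ E2 i2 → P2 v = v := by
      intro v hv
      have h := Submodule.projectionOnto_apply_left hcompl.symm ⟨v, hv⟩
      simp only [hP2def, LinearMap.coe_comp, Function.comp_apply, Submodule.coe_subtype]
      rw [show v = ((⟨v, hv⟩ : E2 i2) : Fin d → ℂ) from rfl, h]
    have hP2_right : ∀ v, v ∈ E1 i1 → P2 v = 0 := by
      intro v hv
      have h := Submodule.projectionOnto_apply_of_mem_right hcompl.symm hv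
      simp only [hP2def, LinearMap.coe_comp, Function.comp_apply, Submodule.coe_subtype, h,
        ZeroMemClass.coe_zero]
    have hsum_proj : ∀ v, P1 v + P2 v = v := by
      intro v
      have h := Submodule.projection_add_projection_eq_self hcompl v
      exact h
    have happly : ∀ (s : ℂ) (v : Fin d → ℂ), (s • P1 + P2) v = s • P1 v + P2 v := by
      intro s v; simp
    have hcomp : ∀ (s s' : ℂ) (v : Fin d → ℂ),
        (s • P1 + P2) ((s' • P1 + P2) v) = (s * s') • P1 v + P2 v := by
      intro s s' v
      rw [happly, happly, map_add, map_add, map_smul, map_smul,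
        hP1_left _ (hP1mem v), hP1_right _ (hP2mem v), hP2_right _ (hP1mem v),
        hP2_left _ (hP2mem v)]
      simp [smul_smul]
    have hmulid : ∀ (s s' : ℂ), s * s' = 1 →
        LinearMap.toMatrix' (s • P1 + P2) * LinearMap.toMatrix' (s' • P1 + P2) = 1 := by
      intro s s' hss
      rw [← LinearMap.toMatrix'_comp, ← LinearMap.toMatrix'_id (R := ℂ) (n := Fin d)]
      congr 1
      apply LinearMap.ext
      intro v
      rw [LinearMap.comp_apply, hcomp, hss, one_smul, LinearMap.id_apply, hsum_proj]
    refine ⟨LinearMap.toMatrix' (z • P1 + P2), ?_, ?_, ?_⟩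
    · exact isUnit_iff_exists.mpr ⟨LinearMap.toMatrix' (z⁻¹ • P1 + P2),
        hmulid z z⁻¹ (mul_inv_cancel₀ hz), hmulid z⁻¹ z (inv_mul_cancel₀ hz)⟩
    · intro v hv
      rw [← Matrix.toLin'_apply, Matrix.toLin'_toMatrix', happly, hP1_left _ hv,
        hP2_right _ hv, add_zero]
    · intro v hv
      rw [← Matrix.toLin'_apply, Matrix.toLin'_toMatrix', happly, hP1_right _ hv,
        hP2_left _ hv, smul_zero, zero_add]
  · -- any such c
    intro c hcu hcz hcid
    have hcinv1 : ((↑hcu.unit⁻¹ : Matrix (Fin d) (Fin d) ℂ) * c) = 1 := hcu.val_inv_mul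
    have hcinv2 : (c * (↑hcu.unit⁻¹ : Matrix (Fin d) (Fin d) ℂ)) = 1 := hcu.mul_val_inv
    have hinj : Function.Injective c.mulVecLin := by
      intro x y hxy
      have hx := congrArg (fun w => (↑hcu.unit⁻¹ : Matrix (Fin d) (Fin d) ℂ).mulVec w) hxy
      simp only [Matrix.mulVecLin_apply, Matrix.mulVec_mulVec, hcinv1,
        Matrix.one_mulVec] at hx
      exact hx
    have hsurj : Function.Surjective c.mulVecLin := by
      intro y
      refine ⟨(↑hcu.unit⁻¹ : Matrix (Fin d) (Fin d) ℂ).mulVec y, ?_⟩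
      simp only [Matrix.mulVecLin_apply, Matrix.mulVec_mulVec, hcinv2, Matrix.one_mulVec]
    have hmap1 : ∀ S : Submodule ℂ (Fin d → ℂ), S ≤ E1 i1 →
        Submodule.map c.mulVecLin S = S := by
      intro S hS
      apply le_antisymm
      · rintro x ⟨y, hy, rfl⟩
        rw [Matrix.mulVecLin_apply, hcz y (hS hy)]
        exact S.smul_mem z hy
      · intro x hx
        refine ⟨z⁻¹ • x, S.smul_mem _ hx, ?_⟩
        rw [Matrix.mulVecLin_apply, hcz _ (hS (S.smul_mem _ hx)), smul_smul,
          mul_inv_cancel₀ hz, one_smul]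
    have hmap2 : ∀ S : Submodule ℂ (Fin d → ℂ), S ≤ E2 i2 →
        Submodule.map c.mulVecLin S = S := by
      intro S hS
      apply le_antisymm
      · rintro x ⟨y, hy, rfl⟩
        rw [Matrix.mulVecLin_apply, hcid y (hS hy)]
        exact hy
      · intro x hx
        exact ⟨x, hx, by rw [Matrix.mulVecLin_apply, hcid x (hS hx)]⟩
    have hflag1 : flagMap d c E1 = E1 := by
      funext k
      show Submodule.map c.mulVecLin (E1 k) = E1 k
      rcases le_or_gt k i1 with h | h
      · exact hmap1 _ (hE1.1 h)
      · have hdec : E1 k = E1 i1 ⊔ (E2 i2 ⊓ E1 k) := by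
          rw [← sup_inf_assoc_of_le _ (hE1.1 h.le), hcodis, top_inf_eq]
        rw [hdec, Submodule.map_sup, hmap1 _ le_rfl, hmap2 _ inf_le_left]
    have hflag2 : flagMap d c E2 = E2 := by
      funext k
      show Submodule.map c.mulVecLin (E2 k) = E2 k
      rcases le_or_gt k i2 with h | h
      · exact hmap2 _ (hE2.1 h)
      · have hcodis' : E2 i2 ⊔ E1 i1 = ⊤ := by rw [sup_comm]; exact hcodis
        have hdec : E2 k = E2 i2 ⊔ (E1 i1 ⊓ E2 k) := by
          rw [← sup_inf_assoc_of_le _ (hE2.1 h.le), hcodis', top_inf_eq]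
        rw [hdec, Submodule.map_sup, hmap2 _ le_rfl, hmap1 _ inf_le_left]
    refine ⟨hflag1, hflag2, ?_⟩
    intro F G hF hG hposF hposG
    have hmapflag : ∀ k1 k2 k3 : ℕ, k1 + k2 + k3 = d →
        E1 k1 ⊔ E2 k2 ⊔ Submodule.map c.mulVecLin (G k3) = ⊤ := by
      intro k1 k2 k3 hk
      have e1 : Submodule.map c.mulVecLin (E1 k1) = E1 k1 := congrFun hflag1 k1
      have e2 : Submodule.map c.mulVecLin (E2 k2) = E2 k2 := congrFun hflag2 k2
      calc E1 k1 ⊔ E2 k2 ⊔ Submodule.map c.mulVecLin (G k3)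
          = Submodule.map c.mulVecLin (E1 k1 ⊔ E2 k2 ⊔ G k3) := by
            rw [Submodule.map_sup, Submodule.map_sup, e1, e2]
        _ = ⊤ := by
            rw [hposG k1 k2 k3 hk, Submodule.map_top, LinearMap.range_eq_top.mpr hsurj]
    -- line vector setup
    have aE1 := flagBasis_adapted hE1
    have aE2 := flagBasis_adapted hE2
    have hG1rank : Module.finrank ℂ ↥(G 1) = 1 := hG.2 1 (by omega)
    have hG1ne : G 1 ≠ ⊥ := by
      intro h; rw [h] at hG1rank; simp at hG1rank
    have huspec := lineVec_spec hG1ne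
    set u := lineVec d (G 1) with hu_def
    have hmapne : Submodule.map c.mulVecLin (G 1) ≠ ⊥ := by
      intro h
      have hmem : c.mulVecLin u ∈ Submodule.map c.mulVecLin (G 1) :=
        Submodule.mem_map_of_mem huspec.1
      rw [h, Submodule.mem_bot] at hmem
      exact huspec.2 (hinj (by rw [hmem, map_zero]))
    have hwspec := lineVec_spec hmapne
    set w := lineVec d (Submodule.map c.mulVecLin (G 1)) with hw_def
    obtain ⟨u'', hu''mem, hu''⟩ := Submodule.mem_map.mp hwspec.1
    have hspan : G 1 = Submodule.span ℂ {u} := by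
      refine (Submodule.eq_of_le_of_finrank_le ?_ ?_).symm
      · rw [Submodule.span_le, Set.singleton_subset_iff]; exact huspec.1
      · rw [hG1rank, finrank_span_singleton huspec.2]
    obtain ⟨t, ht_eq⟩ := Submodule.mem_span_singleton.mp (hspan ▸ hu''mem)
    have ht : t ≠ 0 := by
      intro h
      rw [h, zero_smul] at ht_eq
      rw [← ht_eq, map_zero] at hu''
      exact hwspec.2 hu''.symm
    have humem : u ∈ E1 i1 ⊔ E2 i2 := by rw [hcodis]; exact Submodule.mem_top
    obtain ⟨p, hp, q, hq, hpq⟩ := Submodule.mem_sup.mp humem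
    have hu_eq : u = p + q := hpq.symm
    have hw_eq : w = (t * z) • p + t • q := by
      rw [← hu'', ← ht_eq, map_smul, Matrix.mulVecLin_apply, ← hpq, Matrix.mulVec_add,
        hcz p hp, hcid q hq, smul_add, smul_smul]
    have hpspan : ∀ a : ℕ, i1 ≤ a →
        p ∈ Submodule.span ℂ (flagBasis d E1 '' {m | m < a}) := by
      intro a ha
      have h0 : p ∈ Submodule.span ℂ (flagBasis d E1 '' {m | m < i1}) := by
        rw [← aE1 i1 hi1d]; exact hp
      exact Submodule.span_mono
        (Set.image_mono (fun m hm => lt_of_lt_of_le hm ha)) h0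
    have hqspan : ∀ b : ℕ, i2 ≤ b →
        q ∈ Submodule.span ℂ (flagBasis d E2 '' {m | m < b}) := by
      intro b hb
      have h0 : q ∈ Submodule.span ℂ (flagBasis d E2 '' {m | m < i2}) := by
        rw [← aE2 i2 hi2d]; exact hq
      exact Submodule.span_mono
        (Set.image_mono (fun m hm => lt_of_lt_of_le hm hb)) h0
    refine ⟨hmapflag, ?_, ?_⟩
    · have h1 : wedgeDet d i1 (i2 - 1) (flagBasis d E1) (flagBasis d E2) (fun _ => w) =
          t * wedgeDet d i1 (i2 - 1) (flagBasis d E1) (flagBasis d E2) (fun _ => u) :=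
        wedgeDet_scale1 (by omega) hd0 _ _ (hpspan i1 le_rfl) hu_eq hw_eq
      have h2 : wedgeDet d (i1 - 1) i2 (flagBasis d E1) (flagBasis d E2) (fun _ => w) =
          (t * z) * wedgeDet d (i1 - 1) i2 (flagBasis d E1) (flagBasis d E2) (fun _ => u) :=
        wedgeDet_scale2 (by omega) hd0 _ _ (hqspan i2 le_rfl) hu_eq hw_eq
      simp only [doubleRatio, doubleRatioLine, flagMap]
      rw [← hw_def, ← hu_def, h1, h2]
      exact ratio_scale z t _ _ _ _ ht
    · rintro ⟨k1, k2⟩ hk hkne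
      obtain ⟨hk1, hk2, hksum⟩ := hk
      simp only at hk1 hk2 hksum
      have hk1ne : k1 ≠ i1 := by
        intro h
        apply hkne
        have : k2 = i2 := by omega
        rw [h, this]
      simp only [doubleRatio, doubleRatioLine, flagMap]
      rw [← hw_def, ← hu_def]
      rcases lt_or_gt_of_ne hk1ne with hlt | hgt
      · have h1 : wedgeDet d k1 (k2 - 1) (flagBasis d E1) (flagBasis d E2) (fun _ => w) =
            (t * z) * wedgeDet d k1 (k2 - 1) (flagBasis d E1) (flagBasis d E2) (fun _ => u) :=
          wedgeDet_scale2 (by omega) hd0 _ _ (hqspan (k2 - 1) (by omega)) hu_eq hw_eq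
        have h2 : wedgeDet d (k1 - 1) k2 (flagBasis d E1) (flagBasis d E2) (fun _ => w) =
            (t * z) * wedgeDet d (k1 - 1) k2 (flagBasis d E1) (flagBasis d E2) (fun _ => u) :=
          wedgeDet_scale2 (by omega) hd0 _ _ (hqspan k2 (by omega)) hu_eq hw_eq
        rw [h1, h2]
        exact ratio_scale' (t * z) _ _ _ _ (mul_ne_zero ht hz)
      · have h1 : wedgeDet d k1 (k2 - 1) (flagBasis d E1) (flagBasis d E2) (fun _ => w) =
            t * wedgeDet d k1 (k2 - 1) (flagBasis d E1) (flagBasis d E2) (fun _ => u) :=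
          wedgeDet_scale1 (by omega) hd0 _ _ (hpspan k1 (by omega)) hu_eq hw_eq
        have h2 : wedgeDet d (k1 - 1) k2 (flagBasis d E1) (flagBasis d E2) (fun _ => w) =
            t * wedgeDet d (k1 - 1) k2 (flagBasis d E1) (flagBasis d E2) (fun _ => u) :=
          wedgeDet_scale1 (by omega) hd0 _ _ (hpspan (k1 - 1) (by omega)) hu_eq hw_eq
        rw [h1, h2]
        exact ratio_scale' t _ _ _ _ ht
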